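/- The function H(x,y) = (x² + y²)/(1 + y)² is a first integral of system (C): if x, y : ℝ → ℝ is a solution of (C) with 1 + y(t) ≠ 0 for all t ∈ ℝ, then the function t ↦ (x(t)² + y(t)²)/(1 + y(t))² is constant on ℝ. -/

import Mathlib

/-- `H(x,y) = (x² + y²)/(1 + y)²` is a first integral of system (C):
along any solution of `ẋ = −y + x²`, `ẏ = x + xy` with `1 + y(t) ≠ 0`,
the function `t ↦ (x(t)² + y(t)²)/(1 + y(t))²` is constant. -/
theorem first_integral_C (x y : ℝ → ℝ)
    (hx : ∀ t : ℝ, HasDerivAt x (-y t + (x t) ^ 2) t)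
    (hy : ∀ t : ℝ, HasDerivAt y (x t + x t * y t) t)
    (hden : ∀ t : ℝ, 1 + y t ≠ 0) :
    ∀ t s : ℝ, ((x t) ^ 2 + (y t) ^ 2) / (1 + y t) ^ 2 =
      ((x s) ^ 2 + (y s) ^ 2) / (1 + y s) ^ 2 := by
  set F : ℝ → ℝ := fun t => ((x t) ^ 2 + (y t) ^ 2) / (1 + y t) ^ 2 with hF
  have key : ∀ t : ℝ, HasDerivAt F 0 t := by
    intro t
    have hnum : HasDerivAt (fun t => (x t) ^ 2 + (y t) ^ 2)
        (2 * x t * (-y t + (x t) ^ 2) + 2 * y t * (x t + x t * y t)) t := by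
      have := (((hx t).pow 2).add ((hy t).pow 2))
      refine this.congr_deriv ?_
      ring
    have hd : HasDerivAt (fun t => (1 + y t) ^ 2)
        (2 * (1 + y t) * (x t + x t * y t)) t := by
      have := ((hasDerivAt_const t (1:ℝ)).add (hy t)).pow 2
      refine this.congr_deriv ?_
      simp only [Pi.add_apply]
      ring
    have := hnum.div hd (pow_ne_zero 2 (hden t))
    refine this.congr_deriv ?_
    rw [div_eq_zero_iff]
    left
    ring
  intro t s
  have : ∀ u : ℝ, F u = F 0 := by
    intro u
    have hdiff : Differentiable ℝ F := fun u => (key u).differentiableAt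
    have hderiv : ∀ u, deriv F u = 0 := fun u => (key u).deriv
    have := is_const_of_deriv_eq_zero hdiff hderiv u 0
    exact this
  calc F t = F 0 := this t
    _ = F s := (this s).symm
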